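/- Let (D, ⊑) be a finite partial ordering with least element ⊥ and F a finite set of monotonic and inflationary functions on D. Then the least common fixpoint of the functions in F exists. -/

import Mathlib

/-- Apply all functions in a list, right to left. -/
private def applyList {D : Type*} (l : List (D → D)) (x : D) : D :=
  l.foldr (fun f y => f y) x

private theorem applyList_nil {D : Type*} (x : D) : applyList ([] : List (D → D)) x = x := rfl

private theorem applyList_cons {D : Type*} (f : D → D) (t : List (D → D)) (x : D) :
    applyList (f :: t) x = f (applyList t x) := rfl

private theorem applyList_infl {D : Type*} [PartialOrder D] (l : List (D → D))
    (hinfl : ∀ f ∈ l, ∀ x : D, x ≤ f x) (x : D) : x ≤ applyList l x := by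
  induction l with
  | nil => rw [applyList_nil]
  | cons f t ih =>
    rw [applyList_cons]
    exact le_trans (ih (fun f hf => hinfl f (List.mem_cons_of_mem _ hf)))
      (hinfl f (List.mem_cons_self) _)

private theorem applyList_mono {D : Type*} [PartialOrder D] (l : List (D → D))
    (hmono : ∀ f ∈ l, Monotone f) : Monotone (applyList l) := by
  induction l with
  | nil => intro a b h; rw [applyList_nil, applyList_nil]; exact h
  | cons f t ih =>
    intro a b h
    rw [applyList_cons, applyList_cons]
    exact hmono f (List.mem_cons_self)
      (ih (fun f hf => hmono f (List.mem_cons_of_mem _ hf)) h)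

private theorem applyList_fix {D : Type*} [PartialOrder D] (l : List (D → D))
    (hinfl : ∀ f ∈ l, ∀ x : D, x ≤ f x) (x : D) (hx : applyList l x = x) :
    ∀ f ∈ l, f x = x := by
  induction l with
  | nil => simp
  | cons f t ih =>
    rw [applyList_cons] at hx
    have hinfl' : ∀ g ∈ t, ∀ y : D, y ≤ g y :=
      fun g hg => hinfl g (List.mem_cons_of_mem _ hg)
    have h1 : x ≤ applyList t x := applyList_infl t hinfl' x
    have h2 : applyList t x ≤ f (applyList t x) := hinfl f (List.mem_cons_self) _
    have ht : applyList t x = x := le_antisymm (h2.trans hx.le) h1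
    intro g hg
    rcases List.mem_cons.mp hg with rfl | hg
    · rw [← ht]; rw [ht] at hx; rw [ht]; exact hx
    · exact ih hinfl' ht g hg

private theorem applyList_of_fix {D : Type*} (l : List (D → D)) (x : D)
    (h : ∀ f ∈ l, f x = x) : applyList l x = x := by
  induction l with
  | nil => rfl
  | cons f t ih =>
    rw [applyList_cons, ih (fun g hg => h g (List.mem_cons_of_mem _ hg))]
    exact h f (List.mem_cons_self)

/-- A monotone, inflationary function on a finite poset with bottom has a least
fixpoint, obtained by iterating from `⊥`. -/
private theorem exists_least_fix {D : Type*} [PartialOrder D] [OrderBot D] [Finite D]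
    (g : D → D) (gmono : Monotone g) (ginfl : ∀ x : D, x ≤ g x) :
    ∃ d : D, g d = d ∧ ∀ e : D, g e = e → d ≤ e := by
  have chain : Monotone (fun n => g^[n] (⊥ : D)) := by
    apply monotone_nat_of_le_succ
    intro n
    rw [Function.iterate_succ_apply']
    exact ginfl _
  obtain ⟨m, n, hmn, heq⟩ := Finite.exists_ne_map_eq_of_infinite (fun n => g^[n] (⊥ : D))
  -- wlog m < n
  obtain ⟨m, n, h, heq⟩ : ∃ m n : ℕ, m < n ∧ g^[m] (⊥ : D) = g^[n] ⊥ := by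
    rcases lt_or_gt_of_ne hmn with h | h
    · exact ⟨m, n, h, heq⟩
    · exact ⟨n, m, h, heq.symm⟩
  refine ⟨g^[m] ⊥, ?_, ?_⟩
  · have h1 : g^[m] (⊥ : D) ≤ g (g^[m] ⊥) := ginfl _
    have h2 : g (g^[m] (⊥ : D)) ≤ g^[n] ⊥ := by
      rw [← Function.iterate_succ_apply' g m ⊥]
      exact chain h
    exact le_antisymm (h2.trans heq.ge) h1
  · intro e he
    have : ∀ k, g^[k] (⊥ : D) ≤ e := by
      intro k
      induction k with
      | zero => exact bot_le
      | succ k ih =>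
        rw [Function.iterate_succ_apply']
        calc g (g^[k] (⊥ : D)) ≤ g e := gmono ih
          _ = e := he
    exact this m

theorem least_common_fixpoint_exists {D : Type*} [PartialOrder D] [OrderBot D]
    [Finite D] (F : Set (D → D)) (hF : F.Finite)
    (hmono : ∀ f ∈ F, Monotone f)
    (hinfl : ∀ f ∈ F, ∀ x : D, x ≤ f x) :
    ∃ d : D, (∀ f ∈ F, f d = d) ∧ ∀ e : D, (∀ f ∈ F, f e = e) → d ≤ e := by
  obtain ⟨l, hl⟩ : ∃ l : List (D → D), ∀ f, f ∈ F ↔ f ∈ l := by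
    refine ⟨hF.toFinset.toList, fun f => ?_⟩
    rw [Finset.mem_toList, Set.Finite.mem_toFinset]
  have hmono' : ∀ f ∈ l, Monotone f := fun f hf => hmono f ((hl f).mpr hf)
  have hinfl' : ∀ f ∈ l, ∀ x : D, x ≤ f x := fun f hf => hinfl f ((hl f).mpr hf)
  obtain ⟨d, hd, hleast⟩ := exists_least_fix (applyList l)
    (applyList_mono l hmono') (applyList_infl l hinfl')
  refine ⟨d, ?_, ?_⟩
  · intro f hf
    exact applyList_fix l hinfl' d hd f ((hl f).mp hf)
  · intro e he
    exact hleast e (applyList_of_fix l e (fun f hf => he f ((hl f).mpr hf)))
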